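/- Let p ∈ ℕ, ℓ ≥ 1, V ∈ ℝ^{p×ℓ}, B a real symmetric p×p matrix, C ∈ ℝ^{3ℓ×p}, M₁, M₂, M₃ real symmetric ℓ×ℓ matrices, and set U := [V; I_ℓ; I_ℓ; −I_ℓ] ∈ ℝ^{(p+3ℓ)×ℓ} (block column concatenation). Consider the set 𝒮 of real symmetric positive semidefinite (p+3ℓ)×(p+3ℓ) matrices X satisfying X_{1:p,1:p} = B, X_{p+1:p+3ℓ,1:p} = C, X_{p+1:p+ℓ,p+1:p+ℓ} = M₁, X_{p+ℓ+1:p+2ℓ,p+ℓ+1:p+2ℓ} = M₂, X_{p+2ℓ+1:p+3ℓ,p+2ℓ+1:p+3ℓ} = M₃, and UᵀXU = 0_{ℓ×ℓ}. Then 𝒮 is either empty or contains an element of rank at most p + φ(ℓ). -/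

import Mathlib

open Matrix

noncomputable section

/-- Feasibility predicate for the set in Definition of `φ`. -/
def phiFeas (l : ℕ) (U : Matrix (Fin (2*l)) (Fin l) ℝ)
    (M : Matrix (Fin l) (Fin l) ℝ)
    (Y : Matrix (Fin (2*l)) (Fin (2*l)) ℝ) : Prop :=
  Y.PosSemidef ∧ Uᵀ * Y * U = M ∧
  (∀ i j : Fin l, Y ⟨(i : ℕ), by omega⟩ ⟨(j : ℕ), by omega⟩ = if i = j then (1:ℝ) else 0) ∧
  (∀ i j : Fin l, Y ⟨l + (i : ℕ), by omega⟩ ⟨l + (j : ℕ), by omega⟩ = if i = j then (1:ℝ) else 0)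

/-- `φ(ℓ)`. -/
def phi (l : ℕ) : ℕ :=
  sInf {k : ℕ |
    ∀ (U : Matrix (Fin (2*l)) (Fin l) ℝ) (M : Matrix (Fin l) (Fin l) ℝ),
      M.IsSymm → (∃ Y, phiFeas l U M Y) → ∃ Y, phiFeas l U M Y ∧ Y.rank ≤ k}

/-- The `(p+3ℓ)×ℓ` block matrix `U = [V; I_ℓ; I_ℓ; −I_ℓ]`. -/
def Umat (p l : ℕ) (V : Matrix (Fin p) (Fin l) ℝ) : Matrix (Fin (p + 3*l)) (Fin l) ℝ :=
  Matrix.of fun i j =>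
    if h : (i : ℕ) < p then V ⟨(i : ℕ), h⟩ j
    else (if (i : ℕ) = p + (j : ℕ) then 1 else 0) + (if (i : ℕ) = p + l + (j : ℕ) then 1 else 0)
      - (if (i : ℕ) = p + 2*l + (j : ℕ) then 1 else 0)

/-- Membership in the set `𝒮` of Lemma on rank reduction. -/
def Sfeas (p l : ℕ) (V : Matrix (Fin p) (Fin l) ℝ) (B : Matrix (Fin p) (Fin p) ℝ)
    (C : Matrix (Fin (3*l)) (Fin p) ℝ) (M1 M2 M3 : Matrix (Fin l) (Fin l) ℝ)
    (X : Matrix (Fin (p + 3*l)) (Fin (p + 3*l)) ℝ) : Prop :=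
  X.PosSemidef ∧
  (∀ i j : Fin p, X ⟨(i : ℕ), by omega⟩ ⟨(j : ℕ), by omega⟩ = B i j) ∧
  (∀ (i : Fin (3*l)) (j : Fin p), X ⟨p + (i : ℕ), by omega⟩ ⟨(j : ℕ), by omega⟩ = C i j) ∧
  (∀ i j : Fin l, X ⟨p + (i : ℕ), by omega⟩ ⟨p + (j : ℕ), by omega⟩ = M1 i j) ∧
  (∀ i j : Fin l, X ⟨p + l + (i : ℕ), by omega⟩ ⟨p + l + (j : ℕ), by omega⟩ = M2 i j) ∧
  (∀ i j : Fin l, X ⟨p + 2*l + (i : ℕ), by omega⟩ ⟨p + 2*l + (j : ℕ), by omega⟩ = M3 i j) ∧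
  (Umat p l V)ᵀ * X * (Umat p l V) = 0


set_option linter.unusedSectionVars false
namespace SfeasAux
variable {n : Type*} [Fintype n] [DecidableEq n]

open scoped MatrixOrder in
lemma mul_eq_zero_of_psd {m : Type*} [Fintype m] {X : Matrix n n ℝ} (hX : X.PosSemidef)
    (A : Matrix m n ℝ) (h : A * X * Aᵀ = 0) : A * X = 0 := by
  have hws : (CFC.sqrt X)ᴴ = CFC.sqrt X := (nonneg_iff_posSemidef.1 (CFC.sqrt_nonneg X)).1
  have hww : CFC.sqrt X * CFC.sqrt X = X := CFC.sqrt_mul_sqrt_self X (nonneg_iff_posSemidef.2 hX)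
  have h1 : (A * CFC.sqrt X) * (A * CFC.sqrt X)ᴴ = 0 := by
    rw [conjTranspose_mul, hws, show Aᴴ = Aᵀ from A.conjTranspose_eq_transpose_of_trivial]
    calc A * CFC.sqrt X * (CFC.sqrt X * Aᵀ) = A * (CFC.sqrt X * CFC.sqrt X) * Aᵀ := by
          rw [Matrix.mul_assoc, Matrix.mul_assoc, Matrix.mul_assoc]
      _ = 0 := by rw [hww, h]
  have h2 : A * CFC.sqrt X = 0 := by
    have := Matrix.conjTranspose_mul_self_eq_zero (A := (A * CFC.sqrt X)ᴴ)
    simp only [conjTranspose_conjTranspose] at this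
    have h3 := this.mp h1
    calc A * CFC.sqrt X = ((A * CFC.sqrt X)ᴴ)ᴴ := by rw [conjTranspose_conjTranspose]
      _ = 0 := by rw [h3, conjTranspose_zero]
  calc A * X = (A * CFC.sqrt X) * CFC.sqrt X := by rw [Matrix.mul_assoc, hww]
    _ = 0 := by rw [h2, Matrix.zero_mul]

lemma matrank_add_le (A B : Matrix n n ℝ) : (A + B).rank ≤ A.rank + B.rank := by
  rw [Matrix.rank, Matrix.rank, Matrix.rank, mulVecLin_add]
  have hle : LinearMap.range (A.mulVecLin + B.mulVecLin) ≤
      LinearMap.range A.mulVecLin ⊔ LinearMap.range B.mulVecLin := by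
    rintro x ⟨y, rfl⟩
    exact Submodule.mem_sup.2 ⟨A.mulVecLin y, ⟨y, rfl⟩, B.mulVecLin y, ⟨y, rfl⟩, rfl⟩
  exact (Submodule.finrank_mono hle).trans
    (Submodule.finrank_add_le_finrank_add_finrank _ _)

section fcal
variable {N : Matrix n n ℝ} (hN : N.PosSemidef)

def fcal (f : ℝ → ℝ) : Matrix n n ℝ :=
  (hN.1.eigenvectorUnitary : Matrix n n ℝ) * diagonal (f ∘ hN.1.eigenvalues) *
    (hN.1.eigenvectorUnitary : Matrix n n ℝ)ᴴ

lemma fcal_mul (f g : ℝ → ℝ) : fcal hN f * fcal hN g = fcal hN (fun x => f x * g x) := by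
  have h1 : (hN.1.eigenvectorUnitary : Matrix n n ℝ)ᴴ *
      (hN.1.eigenvectorUnitary : Matrix n n ℝ) = 1 := by
    rw [← Matrix.star_eq_conjTranspose]
    exact Matrix.UnitaryGroup.star_mul_self _
  unfold fcal
  simp only [mul_assoc]
  rw [← mul_assoc ((hN.1.eigenvectorUnitary : Matrix n n ℝ)ᴴ), h1, one_mul,
    ← mul_assoc (diagonal (f ∘ hN.1.eigenvalues)), diagonal_mul_diagonal]
  rfl

lemma fcal_id : fcal hN (fun x => x) = N := by
  conv_rhs => rw [hN.1.spectral_theorem]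
  rw [Unitary.conjStarAlgAut_apply, Matrix.star_eq_conjTranspose]
  rfl

lemma fcal_one : fcal hN (fun _ => 1) = 1 := by
  have h1 : (hN.1.eigenvectorUnitary : Matrix n n ℝ) *
      (hN.1.eigenvectorUnitary : Matrix n n ℝ)ᴴ = 1 := by
    rw [← Matrix.star_eq_conjTranspose]
    rw [mul_eq_one_comm]
    exact Matrix.UnitaryGroup.star_mul_self _
  unfold fcal
  have h2 : diagonal ((fun _ : ℝ => (1:ℝ)) ∘ hN.1.eigenvalues) = (1 : Matrix n n ℝ) := by
    ext i j
    by_cases h : i = j <;> simp [diagonal_apply, one_apply, h]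
  rw [h2, mul_one, h1]

lemma fcal_congr {f g : ℝ → ℝ} (h : ∀ i, f (hN.1.eigenvalues i) = g (hN.1.eigenvalues i)) :
    fcal hN f = fcal hN g := by
  unfold fcal
  rw [show f ∘ hN.1.eigenvalues = g ∘ hN.1.eigenvalues from funext h]

lemma fcal_conjTranspose (f : ℝ → ℝ) : (fcal hN f)ᴴ = fcal hN f := by
  unfold fcal
  simp only [conjTranspose_mul, conjTranspose_conjTranspose, diagonal_conjTranspose,
    Pi.star_def, star_trivial, mul_assoc]

lemma fcal_transpose (f : ℝ → ℝ) : (fcal hN f)ᵀ = fcal hN f := by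
  rw [← conjTranspose_eq_transpose_of_trivial, fcal_conjTranspose]


lemma fcal_sub (f g : ℝ → ℝ) :
    fcal hN f - fcal hN g = fcal hN (fun x => f x - g x) := by
  unfold fcal
  rw [← Matrix.sub_mul, ← Matrix.mul_sub, Matrix.diagonal_sub]
  rfl

lemma fcal_posSemidef {f : ℝ → ℝ} (hf : ∀ i, 0 ≤ f (hN.1.eigenvalues i)) :
    (fcal hN f).PosSemidef :=
  (Matrix.posSemidef_diagonal_iff.2 (fun i => hf i)).mul_mul_conjTranspose_same _

end fcal
end SfeasAux

section pfuns
open SfeasAux Matrix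
variable {n : Type*} [Fintype n] [DecidableEq n] {N : Matrix n n ℝ} (hN : N.PosSemidef)

/-- square root -/
def pS : Matrix n n ℝ := fcal hN Real.sqrt
/-- projection onto range -/
def pP : Matrix n n ℝ := fcal hN (fun x => if x = 0 then 0 else 1)
/-- pseudoinverse of the square root -/
def pI : Matrix n n ℝ := fcal hN (fun x => if x = 0 then 0 else (Real.sqrt x)⁻¹)
/-- pseudoinverse -/
def pV : Matrix n n ℝ := fcal hN (fun x => if x = 0 then 0 else x⁻¹)

lemma pS_mul_pS : pS hN * pS hN = N := by
  rw [pS, fcal_mul]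
  exact (fcal_congr hN (fun i => Real.mul_self_sqrt (hN.eigenvalues_nonneg i))).trans
    (fcal_id hN)

lemma pS_transpose : (pS hN)ᵀ = pS hN := fcal_transpose hN _
lemma pP_transpose : (pP hN)ᵀ = pP hN := fcal_transpose hN _
lemma pI_transpose : (pI hN)ᵀ = pI hN := fcal_transpose hN _
lemma pV_transpose : (pV hN)ᵀ = pV hN := fcal_transpose hN _
lemma pS_conjTranspose : (pS hN)ᴴ = pS hN := fcal_conjTranspose hN _
lemma pP_conjTranspose : (pP hN)ᴴ = pP hN := fcal_conjTranspose hN _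
lemma pI_conjTranspose : (pI hN)ᴴ = pI hN := fcal_conjTranspose hN _
lemma pV_conjTranspose : (pV hN)ᴴ = pV hN := fcal_conjTranspose hN _

lemma pP_mul_N : pP hN * N = N := by
  have h2 : pP hN * fcal hN (fun x => x) = fcal hN (fun x => x) := by
    rw [pP, fcal_mul]
    refine fcal_congr hN (fun i => ?_)
    by_cases h : hN.1.eigenvalues i = 0 <;> simp [h]
  rwa [fcal_id] at h2

lemma N_mul_pP : N * pP hN = N := by
  have h2 : fcal hN (fun x => x) * pP hN = fcal hN (fun x => x) := by
    rw [pP, fcal_mul]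
    refine fcal_congr hN (fun i => ?_)
    by_cases h : hN.1.eigenvalues i = 0 <;> simp [h]
  rwa [fcal_id] at h2

lemma pP_mul_pS : pP hN * pS hN = pS hN := by
  rw [pP, pS, fcal_mul]
  refine fcal_congr hN (fun i => ?_)
  by_cases h : hN.1.eigenvalues i = 0 <;> simp [h]

lemma pS_mul_pP : pS hN * pP hN = pS hN := by
  rw [pP, pS, fcal_mul]
  refine fcal_congr hN (fun i => ?_)
  by_cases h : hN.1.eigenvalues i = 0 <;> simp [h]

lemma pS_mul_pI : pS hN * pI hN = pP hN := by
  rw [pP, pS, pI, fcal_mul]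
  refine fcal_congr hN (fun i => ?_)
  by_cases h : hN.1.eigenvalues i = 0
  · simp [h]
  · have : Real.sqrt (hN.1.eigenvalues i) ≠ 0 :=
      Real.sqrt_ne_zero'.2 (lt_of_le_of_ne (hN.eigenvalues_nonneg i) (Ne.symm h))
    simp [h, mul_inv_cancel₀ this]

lemma pI_mul_pS : pI hN * pS hN = pP hN := by
  rw [pP, pS, pI, fcal_mul]
  refine fcal_congr hN (fun i => ?_)
  by_cases h : hN.1.eigenvalues i = 0
  · simp [h]
  · have : Real.sqrt (hN.1.eigenvalues i) ≠ 0 :=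
      Real.sqrt_ne_zero'.2 (lt_of_le_of_ne (hN.eigenvalues_nonneg i) (Ne.symm h))
    simp [h, inv_mul_cancel₀ this]

lemma pP_mul_pP : pP hN * pP hN = pP hN := by
  rw [pP, fcal_mul]
  refine fcal_congr hN (fun i => ?_)
  by_cases h : hN.1.eigenvalues i = 0 <;> simp [h]

lemma pI_N_pI : pI hN * N * pI hN = pP hN := by
  have h2 : pI hN * (pS hN * pS hN) * pI hN = pP hN := by
    calc pI hN * (pS hN * pS hN) * pI hN
        = (pI hN * pS hN) * (pS hN * pI hN) := by simp only [Matrix.mul_assoc]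
      _ = pP hN * pP hN := by rw [pI_mul_pS, pS_mul_pI]
      _ = pP hN := pP_mul_pP hN
  rwa [pS_mul_pS] at h2

lemma pV_mul_N : pV hN * N = pP hN := by
  have h2 : pV hN * fcal hN (fun x => x) = pP hN := by
    rw [pV, pP, fcal_mul]
    refine fcal_congr hN (fun i => ?_)
    by_cases h : hN.1.eigenvalues i = 0 <;> simp [h, inv_mul_cancel₀]
  rwa [fcal_id] at h2

lemma N_mul_pV : N * pV hN = pP hN := by
  have h2 : fcal hN (fun x => x) * pV hN = pP hN := by
    rw [pV, pP, fcal_mul]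
    refine fcal_congr hN (fun i => ?_)
    by_cases h : hN.1.eigenvalues i = 0 <;> simp [h, mul_inv_cancel₀]
  rwa [fcal_id] at h2

lemma pV_posSemidef : (pV hN).PosSemidef := by
  refine fcal_posSemidef hN (fun i => ?_)
  by_cases h : hN.1.eigenvalues i = 0 <;>
    simp [h, inv_nonneg, hN.eigenvalues_nonneg i]

lemma one_sub_pP_posSemidef : ((1 : Matrix n n ℝ) - pP hN).PosSemidef := by
  have h2 : (1 : Matrix n n ℝ) - pP hN = fcal hN (fun x => 1 - (if x = 0 then 0 else 1)) := by
    rw [← fcal_one hN, pP, fcal_sub]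
  rw [h2]
  refine fcal_posSemidef hN (fun i => ?_)
  by_cases h : hN.1.eigenvalues i = 0 <;> simp [h]

end pfuns

section schur
open SfeasAux Matrix
variable {n m : Type*} [Fintype n] [DecidableEq n] [Fintype m] [DecidableEq m]

lemma pP_mul_pV {N : Matrix n n ℝ} (hN : N.PosSemidef) : pP hN * pV hN = pV hN := by
  rw [pP, pV, fcal_mul]
  refine fcal_congr hN (fun i => ?_)
  by_cases h : hN.1.eigenvalues i = 0 <;> simp [h]

open scoped MatrixOrder in
lemma schur_split (X : Matrix n n ℝ) (hX : X.PosSemidef) (J : Matrix n m ℝ) :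
    ∃ Xp S : Matrix n n ℝ, X = Xp + S ∧ Xp.PosSemidef ∧ S.PosSemidef ∧
      Xp.rank ≤ Fintype.card m ∧ S * J = 0 ∧ Sᵀ = S ∧
      (∀ (k : Type) (_ : Fintype k) (Z : Matrix n k ℝ), X * Z = 0 → Xp * Z = 0) := by
  have hXs : Xᵀ = X := by
    rw [← X.conjTranspose_eq_transpose_of_trivial]; exact hX.1
  have hB : (Jᵀ * X * J).PosSemidef := by
    have := hX.conjTranspose_mul_mul_same J
    rwa [J.conjTranspose_eq_transpose_of_trivial] at this
  set Xp := (X * J) * pV hB * (X * J)ᵀ with hXp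
  set S := X - Xp with hS
  have hXpT : Xpᵀ = Xp := by
    rw [hXp]
    simp only [Matrix.transpose_mul, Matrix.transpose_transpose, pV_transpose]
    simp only [Matrix.mul_assoc]
  have hXpPSD : Xp.PosSemidef := by
    have := (pV_posSemidef hB).mul_mul_conjTranspose_same (X * J)
    rwa [(X * J).conjTranspose_eq_transpose_of_trivial] at this
  have hXprank : Xp.rank ≤ Fintype.card m := by
    rw [hXp, Matrix.mul_assoc]
    exact (Matrix.rank_mul_le_left _ _).trans (Matrix.rank_le_card_width (X * J))
  have hkey : (X * J) * (1 - pP hB) = 0 := by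
    have hA : ((1 - pP hB) * Jᵀ) * X * ((1 - pP hB) * Jᵀ)ᵀ = 0 := by
      have e1 : (1 - pP hB) * (Jᵀ * X * J) = 0 := by
        rw [Matrix.sub_mul, Matrix.one_mul, pP_mul_N hB, sub_self]
      have expand : ((1 - pP hB) * Jᵀ) * X * ((1 - pP hB) * Jᵀ)ᵀ
          = (1 - pP hB) * (Jᵀ * X * J) * (1 - pP hB) := by
        rw [Matrix.transpose_mul, Matrix.transpose_sub, Matrix.transpose_one, pP_transpose,
          Matrix.transpose_transpose]
        simp only [Matrix.mul_assoc]
      rw [expand, e1, Matrix.zero_mul]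
    have h0 := mul_eq_zero_of_psd hX _ hA
    have h0t := congrArg Matrix.transpose h0
    rw [Matrix.transpose_mul, Matrix.transpose_mul, Matrix.transpose_transpose, hXs,
      Matrix.transpose_zero, Matrix.transpose_sub, Matrix.transpose_one, pP_transpose,
      ← Matrix.mul_assoc] at h0t
    exact h0t
  have hSJ : S * J = 0 := by
    have hXpJ : Xp * J = (X * J) * pP hB := by
      rw [hXp]
      have h2 : (X * J)ᵀ * J = Jᵀ * X * J := by
        rw [Matrix.transpose_mul, hXs, Matrix.mul_assoc]
      calc (X * J) * pV hB * (X * J)ᵀ * J = (X * J) * (pV hB * ((X * J)ᵀ * J)) := by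
            simp only [Matrix.mul_assoc]
        _ = (X * J) * (pV hB * (Jᵀ * X * J)) := by rw [h2]
        _ = (X * J) * pP hB := by rw [pV_mul_N hB]
    rw [Matrix.mul_sub, Matrix.mul_one] at hkey
    rw [hS, Matrix.sub_mul, hXpJ, hkey]
  have hSPSD : S.PosSemidef := by
    set W := CFC.sqrt X with hW
    have hWs : Wᴴ = W := (nonneg_iff_posSemidef.1 (CFC.sqrt_nonneg X)).1
    have hWW : W * W = X := CFC.sqrt_mul_sqrt_self X (nonneg_iff_posSemidef.2 hX)
    set Q := (W * J) * pV hB * (W * J)ᵀ with hQ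
    have hQs : Qᵀ = Q := by
      rw [hQ]
      simp only [Matrix.transpose_mul, Matrix.transpose_transpose, pV_transpose]
      simp only [Matrix.mul_assoc]
    have hWJ : (W * J)ᵀ * (W * J) = Jᵀ * X * J := by
      rw [Matrix.transpose_mul, ← W.conjTranspose_eq_transpose_of_trivial, hWs]
      calc Jᵀ * W * (W * J) = Jᵀ * (W * W) * J := by simp only [Matrix.mul_assoc]
        _ = Jᵀ * X * J := by rw [hWW]
    have hQQ : Q * Q = Q := by
      rw [hQ]
      calc (W * J) * pV hB * (W * J)ᵀ * ((W * J) * pV hB * (W * J)ᵀ)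
          = (W * J) * (pV hB * ((W * J)ᵀ * (W * J)) * pV hB) * (W * J)ᵀ := by
            simp only [Matrix.mul_assoc]
        _ = (W * J) * (pV hB * (Jᵀ * X * J) * pV hB) * (W * J)ᵀ := by rw [hWJ]
        _ = (W * J) * pV hB * (W * J)ᵀ := by
            rw [pV_mul_N hB, pP_mul_pV hB]
    have h1Q : ((1 : Matrix n n ℝ) - Q).PosSemidef := by
      have heq : (1 : Matrix n n ℝ) - Q = ((1 : Matrix n n ℝ) - Q)ᴴ * ((1 : Matrix n n ℝ) - Q) := by
        rw [(1 - Q).conjTranspose_eq_transpose_of_trivial, Matrix.transpose_sub,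
          Matrix.transpose_one, hQs]
        simp only [Matrix.sub_mul, Matrix.mul_sub, Matrix.one_mul, Matrix.mul_one, hQQ]
        abel
      rw [heq]
      exact Matrix.posSemidef_conjTranspose_mul_self _
    have hfinal : S = Wᴴ * (1 - Q) * W := by
      rw [hWs, Matrix.mul_sub, Matrix.sub_mul, Matrix.mul_one, hWW, hS, hQ]
      congr 1
      calc Xp = (W * (W * J)) * pV hB * ((W * J)ᵀ * W) := by
            rw [hXp]
            have h1 : W * (W * J) = X * J := by rw [← Matrix.mul_assoc, hWW]
            have h2 : (W * J)ᵀ * W = (X * J)ᵀ := by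
              rw [Matrix.transpose_mul, Matrix.transpose_mul, hXs,
                ← W.conjTranspose_eq_transpose_of_trivial, hWs, Matrix.mul_assoc, hWW]
            rw [h1, h2]
        _ = W * ((W * J) * pV hB * (W * J)ᵀ) * W := by simp only [Matrix.mul_assoc]
    rw [hfinal]
    exact h1Q.conjTranspose_mul_mul_same W
  refine ⟨Xp, S, by rw [hS]; abel, hXpPSD, hSPSD, hXprank, hSJ, ?_, ?_⟩
  · rw [hS, Matrix.transpose_sub, hXs, hXpT]
  · intro k _ Z hZ
    have h3 : (X * J)ᵀ * Z = 0 := by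
      rw [Matrix.transpose_mul, Matrix.mul_assoc, hXs, hZ, Matrix.mul_zero]
    calc Xp * Z = (X * J) * pV hB * ((X * J)ᵀ * Z) := by
          rw [hXp]; simp only [Matrix.mul_assoc]
      _ = 0 := by rw [h3, Matrix.mul_zero]
end schur

section core
open SfeasAux Matrix

lemma phi_mem (l : ℕ) (U : Matrix (Fin (2*l)) (Fin l) ℝ) (M : Matrix (Fin l) (Fin l) ℝ)
    (hM : M.IsSymm) (hex : ∃ Y, phiFeas l U M Y) :
    ∃ Y, phiFeas l U M Y ∧ Y.rank ≤ phi l := by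
  have hmem : (2*l) ∈ {k : ℕ |
      ∀ (U : Matrix (Fin (2*l)) (Fin l) ℝ) (M : Matrix (Fin l) (Fin l) ℝ),
        M.IsSymm → (∃ Y, phiFeas l U M Y) → ∃ Y, phiFeas l U M Y ∧ Y.rank ≤ k} := by
    rintro U M - ⟨Y, hY⟩
    refine ⟨Y, hY, ?_⟩
    simpa using Matrix.rank_le_card_width Y
  have := Nat.sInf_mem (⟨2*l, hmem⟩ : Set.Nonempty _)
  exact this U M hM hex

variable (l : ℕ)

def e2 : Fin l ⊕ Fin l ≃ Fin (2*l) := finSumFinEquiv.trans (finCongr (two_mul l).symm)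

lemma e2_inl (i : Fin l) : (e2 l (Sum.inl i) : ℕ) = (i : ℕ) := by simp [e2]

lemma e2_inr (i : Fin l) : (e2 l (Sum.inr i) : ℕ) = l + (i : ℕ) := by simp [e2]; omega

/-- conjugation of a 2x2 block matrix by diagonal block matrices -/
lemma diag_conj {κ : Type*} [Fintype κ] [DecidableEq κ]
    (a b c d : Matrix κ κ ℝ) (S : Matrix (κ ⊕ κ) (κ ⊕ κ) ℝ) :
    fromBlocks a 0 0 b * S * fromBlocks c 0 0 d
      = fromBlocks (a * S.toBlocks₁₁ * c) (a * S.toBlocks₁₂ * d)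
          (b * S.toBlocks₂₁ * c) (b * S.toBlocks₂₂ * d) := by
  conv_lhs => rw [← fromBlocks_toBlocks S]
  rw [fromBlocks_multiply, fromBlocks_multiply]
  simp only [Matrix.mul_zero, Matrix.zero_mul, add_zero, zero_add]

/-- conjugation by `[1; -1]` extracts the signed sum of blocks -/
lemma conjEb {κ : Type*} [Fintype κ] [DecidableEq κ] (Q : Matrix (κ ⊕ κ) (κ ⊕ κ) ℝ) :
    (fromRows (1 : Matrix κ κ ℝ) (-1 : Matrix κ κ ℝ))ᵀ * Q * fromRows (1 : Matrix κ κ ℝ) (-1 : Matrix κ κ ℝ)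
      = Q.toBlocks₁₁ - Q.toBlocks₂₁ - (Q.toBlocks₁₂ - Q.toBlocks₂₂) := by
  rw [transpose_fromRows, Matrix.transpose_one]
  have h1 : fromCols (1 : Matrix κ κ ℝ) ((-1 : Matrix κ κ ℝ)ᵀ) * Q
      = Q.toRows₁ - Q.toRows₂ := by
    conv_lhs => rw [← fromRows_toRows Q]
    rw [fromCols_mul_fromRows, Matrix.one_mul, Matrix.transpose_neg, Matrix.transpose_one,
      Matrix.neg_mul, Matrix.one_mul, ← sub_eq_add_neg]
  rw [h1]
  have h2 : (Q.toRows₁ - Q.toRows₂) * fromRows (1 : Matrix κ κ ℝ) (-1 : Matrix κ κ ℝ)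
      = (Q.toRows₁ - Q.toRows₂).toCols₁ - (Q.toRows₁ - Q.toRows₂).toCols₂ := by
    conv_lhs => rw [← fromCols_toCols (Q.toRows₁ - Q.toRows₂)]
    rw [fromCols_mul_fromRows, Matrix.mul_one, Matrix.mul_neg, Matrix.mul_one,
      ← sub_eq_add_neg]
  rw [h2]
  ext i j
  simp [toCols₁, toCols₂, toRows₁, toRows₂, toBlocks₁₁, toBlocks₁₂, toBlocks₂₁, toBlocks₂₂]

/-- Core reduction at the `2l` level. -/
lemma core2 (S₂ : Matrix (Fin l ⊕ Fin l) (Fin l ⊕ Fin l) ℝ) (hS₂ : S₂.PosSemidef) :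
    ∃ T : Matrix (Fin l ⊕ Fin l) (Fin l ⊕ Fin l) ℝ,
      T.PosSemidef ∧ T.rank ≤ phi l ∧
      (∀ i j, T (Sum.inl i) (Sum.inl j) = S₂ (Sum.inl i) (Sum.inl j)) ∧
      (∀ i j, T (Sum.inr i) (Sum.inr j) = S₂ (Sum.inr i) (Sum.inr j)) ∧
      (∀ i j, T (Sum.inl i) (Sum.inr j) + T (Sum.inr i) (Sum.inl j)
        = S₂ (Sum.inl i) (Sum.inr j) + S₂ (Sum.inr i) (Sum.inl j)) := by
  classical
  have hS₂s : S₂ᵀ = S₂ := by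
    rw [← S₂.conjTranspose_eq_transpose_of_trivial]; exact hS₂.1
  have hN1 : (S₂.toBlocks₁₁).PosSemidef := hS₂.submatrix Sum.inl
  have hN2 : (S₂.toBlocks₂₂).PosSemidef := hS₂.submatrix Sum.inr
  -- range absorption for the two block rows
  have key1 : (1 - pP hN1) * S₂.toRows₁ = 0 := by
    have hc : (fromCols (1 : Matrix (Fin l) (Fin l) ℝ) (0 : Matrix (Fin l) (Fin l) ℝ)) * S₂ = S₂.toRows₁ := by
      conv_lhs => rw [← fromRows_toRows S₂]
      rw [fromCols_mul_fromRows, Matrix.one_mul, Matrix.zero_mul, add_zero]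
    have hc2 : S₂.toRows₁ * ((fromCols (1 : Matrix (Fin l) (Fin l) ℝ) (0 : Matrix (Fin l) (Fin l) ℝ)))ᵀ
        = S₂.toBlocks₁₁ := by
      rw [transpose_fromCols, Matrix.transpose_one, Matrix.transpose_zero]
      conv_lhs => rw [← fromCols_toCols S₂.toRows₁]
      rw [fromCols_mul_fromRows, Matrix.mul_one, Matrix.mul_zero, add_zero]
      rfl
    have hA : ((1 - pP hN1) * (fromCols (1 : Matrix (Fin l) (Fin l) ℝ) (0 : Matrix (Fin l) (Fin l) ℝ))) * S₂ *
        ((1 - pP hN1) * (fromCols (1 : Matrix (Fin l) (Fin l) ℝ) (0 : Matrix (Fin l) (Fin l) ℝ)))ᵀ = 0 := by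
      rw [Matrix.transpose_mul, Matrix.transpose_sub, Matrix.transpose_one, pP_transpose]
      calc (1 - pP hN1) * (fromCols (1 : Matrix (Fin l) (Fin l) ℝ) (0 : Matrix (Fin l) (Fin l) ℝ)) * S₂ * ((fromCols (1 : Matrix (Fin l) (Fin l) ℝ) (0 : Matrix (Fin l) (Fin l) ℝ))ᵀ * (1 - pP hN1))
          = (1 - pP hN1) * (((fromCols (1 : Matrix (Fin l) (Fin l) ℝ) (0 : Matrix (Fin l) (Fin l) ℝ)) * S₂) * (fromCols (1 : Matrix (Fin l) (Fin l) ℝ) (0 : Matrix (Fin l) (Fin l) ℝ))ᵀ) * (1 - pP hN1) := by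
            simp only [Matrix.mul_assoc]
        _ = (1 - pP hN1) * S₂.toBlocks₁₁ * (1 - pP hN1) := by rw [hc, hc2]
        _ = 0 := by
            rw [Matrix.sub_mul, Matrix.one_mul, pP_mul_N hN1, sub_self, Matrix.zero_mul]
    have h0 := mul_eq_zero_of_psd hS₂ _ hA
    rw [Matrix.mul_assoc, hc] at h0
    exact h0
  have key2 : (1 - pP hN2) * S₂.toRows₂ = 0 := by
    have hc : (fromCols (0 : Matrix (Fin l) (Fin l) ℝ) (1 : Matrix (Fin l) (Fin l) ℝ)) * S₂ = S₂.toRows₂ := by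
      conv_lhs => rw [← fromRows_toRows S₂]
      rw [fromCols_mul_fromRows, Matrix.one_mul, Matrix.zero_mul, zero_add]
    have hc2 : S₂.toRows₂ * ((fromCols (0 : Matrix (Fin l) (Fin l) ℝ) (1 : Matrix (Fin l) (Fin l) ℝ)))ᵀ
        = S₂.toBlocks₂₂ := by
      rw [transpose_fromCols, Matrix.transpose_one, Matrix.transpose_zero]
      conv_lhs => rw [← fromCols_toCols S₂.toRows₂]
      rw [fromCols_mul_fromRows, Matrix.mul_one, Matrix.mul_zero, zero_add]
      rfl
    have hA : ((1 - pP hN2) * (fromCols (0 : Matrix (Fin l) (Fin l) ℝ) (1 : Matrix (Fin l) (Fin l) ℝ))) * S₂ *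
        ((1 - pP hN2) * (fromCols (0 : Matrix (Fin l) (Fin l) ℝ) (1 : Matrix (Fin l) (Fin l) ℝ)))ᵀ = 0 := by
      rw [Matrix.transpose_mul, Matrix.transpose_sub, Matrix.transpose_one, pP_transpose]
      calc (1 - pP hN2) * (fromCols (0 : Matrix (Fin l) (Fin l) ℝ) (1 : Matrix (Fin l) (Fin l) ℝ)) * S₂ * ((fromCols (0 : Matrix (Fin l) (Fin l) ℝ) (1 : Matrix (Fin l) (Fin l) ℝ))ᵀ * (1 - pP hN2))
          = (1 - pP hN2) * (((fromCols (0 : Matrix (Fin l) (Fin l) ℝ) (1 : Matrix (Fin l) (Fin l) ℝ)) * S₂) * (fromCols (0 : Matrix (Fin l) (Fin l) ℝ) (1 : Matrix (Fin l) (Fin l) ℝ))ᵀ) * (1 - pP hN2) := by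
            simp only [Matrix.mul_assoc]
        _ = (1 - pP hN2) * S₂.toBlocks₂₂ * (1 - pP hN2) := by rw [hc, hc2]
        _ = 0 := by
            rw [Matrix.sub_mul, Matrix.one_mul, pP_mul_N hN2, sub_self, Matrix.zero_mul]
    have h0 := mul_eq_zero_of_psd hS₂ _ hA
    rw [Matrix.mul_assoc, hc] at h0
    exact h0
  set Pd := fromBlocks (pP hN1) 0 0 (pP hN2) with hPd
  have hPdS : Pd * S₂ = S₂ := by
    conv_lhs => rw [← fromRows_toRows S₂]
    rw [hPd, fromBlocks_mul_fromRows]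
    have k1 : pP hN1 * S₂.toRows₁ = S₂.toRows₁ := by
      have h := key1; rw [Matrix.sub_mul, Matrix.one_mul, sub_eq_zero] at h; exact h.symm
    have k2 : pP hN2 * S₂.toRows₂ = S₂.toRows₂ := by
      have h := key2; rw [Matrix.sub_mul, Matrix.one_mul, sub_eq_zero] at h; exact h.symm
    rw [Matrix.zero_mul, Matrix.zero_mul, add_zero, zero_add, k1, k2, fromRows_toRows]
  have hPdT : Pdᵀ = Pd := by
    rw [hPd]
    simp only [fromBlocks_transpose, pP_transpose, Matrix.transpose_zero]
  have hSPd : S₂ * Pd = S₂ := by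
    have h := congrArg Matrix.transpose hPdS
    rwa [Matrix.transpose_mul, hPdT, hS₂s] at h
  set D := fromBlocks (pS hN1) 0 0 (pS hN2) with hD
  set Di := fromBlocks (pI hN1) 0 0 (pI hN2) with hDi
  have hDT : Dᵀ = D := by
    rw [hD]
    simp only [fromBlocks_transpose, pS_transpose, Matrix.transpose_zero]
  have hDiT : Diᵀ = Di := by
    rw [hDi]
    simp only [fromBlocks_transpose, pI_transpose, Matrix.transpose_zero]
  have hDDi : D * Di = Pd := by
    rw [hD, hDi, hPd, fromBlocks_multiply]
    simp only [Matrix.mul_zero, Matrix.zero_mul, add_zero, zero_add, pS_mul_pI]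
  have hDiD : Di * D = Pd := by
    rw [hD, hDi, hPd, fromBlocks_multiply]
    simp only [Matrix.mul_zero, Matrix.zero_mul, add_zero, zero_add, pI_mul_pS]
  have hDPd : D * Pd = D := by
    rw [hD, hPd, fromBlocks_multiply]
    simp only [Matrix.mul_zero, Matrix.zero_mul, add_zero, zero_add, pS_mul_pP]
  set Y0b := Di * S₂ * Di + (1 - Pd) with hY0b
  have hPdPd : Pd * Pd = Pd := by
    rw [hPd, fromBlocks_multiply]
    simp only [Matrix.mul_zero, Matrix.zero_mul, add_zero, zero_add, pP_mul_pP]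
  have hOnePd : ((1 : Matrix (Fin l ⊕ Fin l) (Fin l ⊕ Fin l) ℝ) - Pd).PosSemidef := by
    have hs : ((1 : Matrix (Fin l ⊕ Fin l) (Fin l ⊕ Fin l) ℝ) - Pd)ᵀ = 1 - Pd := by
      rw [Matrix.transpose_sub, Matrix.transpose_one, hPdT]
    have heq : (1 : Matrix (Fin l ⊕ Fin l) (Fin l ⊕ Fin l) ℝ) - Pd
        = ((1 : Matrix (Fin l ⊕ Fin l) (Fin l ⊕ Fin l) ℝ) - Pd)ᴴ * (1 - Pd) := by
      rw [(1 - Pd).conjTranspose_eq_transpose_of_trivial, hs]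
      simp only [Matrix.sub_mul, Matrix.mul_sub, Matrix.one_mul, Matrix.mul_one, hPdPd]
      abel
    rw [heq]
    exact Matrix.posSemidef_conjTranspose_mul_self _
  have hY0bPSD : Y0b.PosSemidef := by
    rw [hY0b]
    refine Matrix.PosSemidef.add ?_ hOnePd
    have := hS₂.mul_mul_conjTranspose_same Di
    rwa [Di.conjTranspose_eq_transpose_of_trivial, hDiT] at this
  have hDY0D : D * Y0b * D = S₂ := by
    rw [hY0b, Matrix.mul_add, Matrix.add_mul]
    have h1 : D * (Di * S₂ * Di) * D = Pd * S₂ * Pd := by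
      calc D * (Di * S₂ * Di) * D = (D * Di) * S₂ * (Di * D) := by simp only [Matrix.mul_assoc]
        _ = Pd * S₂ * Pd := by rw [hDDi, hDiD]
    have h2 : D * (1 - Pd) * D = 0 := by
      rw [Matrix.mul_sub, Matrix.mul_one, Matrix.sub_mul, hDPd, sub_self]
    rw [h1, h2, add_zero, hPdS, hSPd]
  -- block form of Y0b
  have hY0blk : Y0b = fromBlocks 1 (pI hN1 * S₂.toBlocks₁₂ * pI hN2)
      (pI hN2 * S₂.toBlocks₂₁ * pI hN1) 1 := by
    rw [hY0b, hDi, diag_conj]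
    have hsub : (1 : Matrix (Fin l ⊕ Fin l) (Fin l ⊕ Fin l) ℝ) - Pd
        = fromBlocks (1 - pP hN1) 0 0 (1 - pP hN2) := by
      rw [hPd, ← fromBlocks_one, sub_eq_add_neg, fromBlocks_neg, fromBlocks_add]
      simp only [add_zero, zero_add, neg_zero, ← sub_eq_add_neg]
    have e1 : pP hN1 + (1 - pP hN1) = (1 : Matrix (Fin l) (Fin l) ℝ) := by abel
    have e2' : pP hN2 + (1 - pP hN2) = (1 : Matrix (Fin l) (Fin l) ℝ) := by abel
    rw [hsub, fromBlocks_add, pI_N_pI hN1, pI_N_pI hN2, add_zero, add_zero, e1, e2']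
  -- the phi instance
  set Eb := fromRows (1 : Matrix (Fin l) (Fin l) ℝ) (-1 : Matrix (Fin l) (Fin l) ℝ) with hEb
  set U' : Matrix (Fin (2*l)) (Fin l) ℝ := (D * Eb).submatrix (e2 l).symm id with hU'
  set Mm := Ebᵀ * S₂ * Eb with hMm
  have hMmsymm : Mm.IsSymm := by
    rw [Matrix.IsSymm, hMm, Matrix.transpose_mul, Matrix.transpose_mul,
      Matrix.transpose_transpose, hS₂s, Matrix.mul_assoc]
  have hconv : ∀ Q : Matrix (Fin l ⊕ Fin l) (Fin l ⊕ Fin l) ℝ,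
      U'ᵀ * (Q.submatrix (e2 l).symm (e2 l).symm) * U' = (D * Eb)ᵀ * Q * (D * Eb) := by
    intro Q
    rw [hU', Matrix.transpose_submatrix, Matrix.submatrix_mul_equiv,
      Matrix.submatrix_mul_equiv, Matrix.submatrix_id_id]
  have hsymml : ∀ i : Fin l, ((e2 l).symm ⟨(i : ℕ), by omega⟩ : Fin l ⊕ Fin l) = Sum.inl i := by
    intro i
    rw [Equiv.symm_apply_eq]
    exact Fin.ext (e2_inl l i)
  have hsymmr : ∀ i : Fin l, ((e2 l).symm ⟨l + (i : ℕ), by omega⟩ : Fin l ⊕ Fin l) = Sum.inr i := by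
    intro i
    rw [Equiv.symm_apply_eq]
    exact Fin.ext (e2_inr l i)
  have hfeas0 : phiFeas l U' Mm (Y0b.submatrix (e2 l).symm (e2 l).symm) := by
    refine ⟨hY0bPSD.submatrix _, ?_, ?_, ?_⟩
    · rw [hconv Y0b]
      calc (D * Eb)ᵀ * Y0b * (D * Eb) = Ebᵀ * (D * Y0b * D) * Eb := by
            rw [Matrix.transpose_mul, hDT]; simp only [Matrix.mul_assoc]
        _ = Mm := by rw [hDY0D, hMm]
    · intro i j
      rw [Matrix.submatrix_apply, hsymml i, hsymml j, hY0blk, fromBlocks_apply₁₁,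
        Matrix.one_apply]
    · intro i j
      rw [Matrix.submatrix_apply, hsymmr i, hsymmr j, hY0blk, fromBlocks_apply₂₂,
        Matrix.one_apply]
  obtain ⟨Y, hY, hYrank⟩ := phi_mem l U' Mm hMmsymm ⟨_, hfeas0⟩
  set Yb := Y.submatrix (e2 l) (e2 l) with hYb
  have hYexp : Y = Yb.submatrix (e2 l).symm (e2 l).symm := by
    rw [hYb, Matrix.submatrix_submatrix, Equiv.self_comp_symm, Matrix.submatrix_id_id]
  have hYbPSD : Yb.PosSemidef := hY.1.submatrix _
  have hY11 : Yb.toBlocks₁₁ = 1 := by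
    ext i j
    have h := hY.2.2.1 i j
    have hil : (e2 l) (Sum.inl i) = (⟨(i : ℕ), by omega⟩ : Fin (2*l)) := Fin.ext (e2_inl l i)
    have hjl : (e2 l) (Sum.inl j) = (⟨(j : ℕ), by omega⟩ : Fin (2*l)) := Fin.ext (e2_inl l j)
    rw [toBlocks₁₁]
    simp only [Matrix.of_apply, hYb, Matrix.submatrix_apply, hil, hjl, h, Matrix.one_apply]
  have hY22 : Yb.toBlocks₂₂ = 1 := by
    ext i j
    have h := hY.2.2.2 i j
    have hil : (e2 l) (Sum.inr i) = (⟨l + (i : ℕ), by omega⟩ : Fin (2*l)) := Fin.ext (e2_inr l i)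
    have hjl : (e2 l) (Sum.inr j) = (⟨l + (j : ℕ), by omega⟩ : Fin (2*l)) := Fin.ext (e2_inr l j)
    rw [toBlocks₂₂]
    simp only [Matrix.of_apply, hYb, Matrix.submatrix_apply, hil, hjl, h, Matrix.one_apply]
  set T := D * Yb * D with hT
  have hTPSD : T.PosSemidef := by
    have := hYbPSD.mul_mul_conjTranspose_same D
    rwa [D.conjTranspose_eq_transpose_of_trivial, hDT, ← hT] at this
  have hTrank : T.rank ≤ phi l := by
    have h1 : T.rank ≤ Yb.rank := by
      rw [hT, Matrix.mul_assoc]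
      exact (Matrix.rank_mul_le_right _ _).trans (Matrix.rank_mul_le_left _ _)
    have h2 : Yb.rank = Y.rank := by rw [hYb, Matrix.rank_submatrix]
    omega
  have hTblk : T = fromBlocks S₂.toBlocks₁₁ (pS hN1 * Yb.toBlocks₁₂ * pS hN2)
      (pS hN2 * Yb.toBlocks₂₁ * pS hN1) S₂.toBlocks₂₂ := by
    rw [hT, hD, diag_conj, hY11, hY22, Matrix.mul_one, Matrix.mul_one, pS_mul_pS, pS_mul_pS]
  have hcross : T.toBlocks₁₁ - T.toBlocks₂₁ - (T.toBlocks₁₂ - T.toBlocks₂₂)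
      = S₂.toBlocks₁₁ - S₂.toBlocks₂₁ - (S₂.toBlocks₁₂ - S₂.toBlocks₂₂) := by
    have h := hY.2.1
    rw [hYexp, hconv Yb] at h
    have h2 : Ebᵀ * T * Eb = Mm := by
      rw [← h, hT, Matrix.transpose_mul, hDT]
      simp only [Matrix.mul_assoc]
    rw [hMm, hEb, conjEb, conjEb] at h2
    exact h2
  refine ⟨T, hTPSD, hTrank, ?_, ?_, ?_⟩
  · intro i j
    rw [hTblk, fromBlocks_apply₁₁]
    rfl
  · intro i j
    rw [hTblk, fromBlocks_apply₂₂]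
    rfl
  · intro i j
    have h := congrFun (congrFun hcross i) j
    simp only [Matrix.sub_apply] at h
    have t12 : T.toBlocks₁₂ i j = T (Sum.inl i) (Sum.inr j) := rfl
    have t21 : T.toBlocks₂₁ i j = T (Sum.inr i) (Sum.inl j) := rfl
    have s12 : S₂.toBlocks₁₂ i j = S₂ (Sum.inl i) (Sum.inr j) := rfl
    have s21 : S₂.toBlocks₂₁ i j = S₂ (Sum.inr i) (Sum.inl j) := rfl
    rw [t12, t21, s12, s21] at h
    have e11' : T (Sum.inl i) (Sum.inl j) = S₂ (Sum.inl i) (Sum.inl j) := by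
      rw [hTblk, fromBlocks_apply₁₁]; rfl
    have e22' : T (Sum.inr i) (Sum.inr j) = S₂ (Sum.inr i) (Sum.inr j) := by
      rw [hTblk, fromBlocks_apply₂₂]; rfl
    have e11'' : T.toBlocks₁₁ i j = T (Sum.inl i) (Sum.inl j) := rfl
    have e22'' : T.toBlocks₂₂ i j = T (Sum.inr i) (Sum.inr j) := rfl
    rw [e11'', e22''] at h
    have s11 : S₂.toBlocks₁₁ i j = S₂ (Sum.inl i) (Sum.inl j) := rfl
    have s22 : S₂.toBlocks₂₂ i j = S₂ (Sum.inr i) (Sum.inr j) := rfl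
    rw [s11, s22] at h
    linarith [h, e11', e22']

end core

section core3
open SfeasAux Matrix

variable (l : ℕ)

def E3 : Matrix (Fin l ⊕ (Fin l ⊕ Fin l)) (Fin l) ℝ :=
  fromRows (1 : Matrix (Fin l) (Fin l) ℝ)
    (fromRows (1 : Matrix (Fin l) (Fin l) ℝ) (-1 : Matrix (Fin l) (Fin l) ℝ))

def J3 : Matrix (Fin l ⊕ (Fin l ⊕ Fin l)) (Fin l ⊕ Fin l) ℝ :=
  fromRows (fromCols (1 : Matrix (Fin l) (Fin l) ℝ) (0 : Matrix (Fin l) (Fin l) ℝ))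
    (fromRows (fromCols (0 : Matrix (Fin l) (Fin l) ℝ) (1 : Matrix (Fin l) (Fin l) ℝ))
      (fromCols (1 : Matrix (Fin l) (Fin l) ℝ) (1 : Matrix (Fin l) (Fin l) ℝ)))

variable {n : Type*} [Fintype n]

lemma cols10_mul (M : Matrix (Fin l ⊕ Fin l) n ℝ) :
    fromCols (1 : Matrix (Fin l) (Fin l) ℝ) (0 : Matrix (Fin l) (Fin l) ℝ) * M
      = M.toRows₁ := by
  conv_lhs => rw [← fromRows_toRows M]
  rw [fromCols_mul_fromRows, Matrix.one_mul, Matrix.zero_mul, add_zero]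

lemma cols01_mul (M : Matrix (Fin l ⊕ Fin l) n ℝ) :
    fromCols (0 : Matrix (Fin l) (Fin l) ℝ) (1 : Matrix (Fin l) (Fin l) ℝ) * M
      = M.toRows₂ := by
  conv_lhs => rw [← fromRows_toRows M]
  rw [fromCols_mul_fromRows, Matrix.one_mul, Matrix.zero_mul, zero_add]

lemma cols11_mul (M : Matrix (Fin l ⊕ Fin l) n ℝ) :
    fromCols (1 : Matrix (Fin l) (Fin l) ℝ) (1 : Matrix (Fin l) (Fin l) ℝ) * M
      = M.toRows₁ + M.toRows₂ := by
  conv_lhs => rw [← fromRows_toRows M]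
  rw [fromCols_mul_fromRows, Matrix.one_mul, Matrix.one_mul]

lemma J3_mul (M : Matrix (Fin l ⊕ Fin l) n ℝ) :
    J3 l * M = fromRows M.toRows₁ (fromRows M.toRows₂ (M.toRows₁ + M.toRows₂)) := by
  rw [J3, fromRows_mul, fromRows_mul, cols10_mul, cols01_mul, cols11_mul]

lemma J3_mul_inl (M : Matrix (Fin l ⊕ Fin l) n ℝ) (i : Fin l) (c : n) :
    (J3 l * M) (Sum.inl i) c = M (Sum.inl i) c := by
  rw [J3_mul, fromRows_apply_inl]; rfl

lemma J3_mul_inrl (M : Matrix (Fin l ⊕ Fin l) n ℝ) (i : Fin l) (c : n) :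
    (J3 l * M) (Sum.inr (Sum.inl i)) c = M (Sum.inr i) c := by
  rw [J3_mul, fromRows_apply_inr, fromRows_apply_inl]; rfl

lemma J3_mul_inrr (M : Matrix (Fin l ⊕ Fin l) n ℝ) (i : Fin l) (c : n) :
    (J3 l * M) (Sum.inr (Sum.inr i)) c = M (Sum.inl i) c + M (Sum.inr i) c := by
  rw [J3_mul, fromRows_apply_inr, fromRows_apply_inr]; rfl

end core3

section core3b
open SfeasAux Matrix
variable (l : ℕ) {n : Type*} [Fintype n]

lemma mul_J3T_inl (M : Matrix n (Fin l ⊕ Fin l) ℝ) (r : n) (j : Fin l) :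
    (M * (J3 l)ᵀ) r (Sum.inl j) = M r (Sum.inl j) := by
  have h : (M * (J3 l)ᵀ) r (Sum.inl j) = ((J3 l) * Mᵀ) (Sum.inl j) r := by
    rw [← Matrix.transpose_apply (M * (J3 l)ᵀ), Matrix.transpose_mul, Matrix.transpose_transpose]
  rw [h, J3_mul_inl]
  rfl

lemma mul_J3T_inrl (M : Matrix n (Fin l ⊕ Fin l) ℝ) (r : n) (j : Fin l) :
    (M * (J3 l)ᵀ) r (Sum.inr (Sum.inl j)) = M r (Sum.inr j) := by
  have h : (M * (J3 l)ᵀ) r (Sum.inr (Sum.inl j)) = ((J3 l) * Mᵀ) (Sum.inr (Sum.inl j)) r := by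
    rw [← Matrix.transpose_apply (M * (J3 l)ᵀ), Matrix.transpose_mul, Matrix.transpose_transpose]
  rw [h, J3_mul_inrl]
  rfl

lemma mul_J3T_inrr (M : Matrix n (Fin l ⊕ Fin l) ℝ) (r : n) (j : Fin l) :
    (M * (J3 l)ᵀ) r (Sum.inr (Sum.inr j)) = M r (Sum.inl j) + M r (Sum.inr j) := by
  have h : (M * (J3 l)ᵀ) r (Sum.inr (Sum.inr j)) = ((J3 l) * Mᵀ) (Sum.inr (Sum.inr j)) r := by
    rw [← Matrix.transpose_apply (M * (J3 l)ᵀ), Matrix.transpose_mul, Matrix.transpose_transpose]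
  rw [h, J3_mul_inrr]
  rfl

lemma J3T_mul_E3 : (J3 l)ᵀ * E3 l = 0 := by
  ext a k
  rw [Matrix.mul_apply, Matrix.zero_apply, Fintype.sum_sum_type]
  simp only [Fintype.sum_sum_type, Matrix.transpose_apply]
  cases a with
  | inl i =>
    simp [J3, E3, fromRows_apply_inl, fromRows_apply_inr, fromCols_apply_inl,
      fromCols_apply_inr, Matrix.one_apply, Matrix.neg_apply, mul_ite, ite_mul,
      Finset.sum_ite_eq, Finset.sum_ite_eq']
  | inr i =>
    simp [J3, E3, fromRows_apply_inl, fromRows_apply_inr, fromCols_apply_inl,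
      fromCols_apply_inr, Matrix.one_apply, Matrix.neg_apply, mul_ite, ite_mul,
      Finset.sum_ite_eq, Finset.sum_ite_eq']

/-- column relation forced by `S₃ * E₃ = 0` -/
lemma E3_col_rel (S₃ : Matrix (Fin l ⊕ (Fin l ⊕ Fin l)) (Fin l ⊕ (Fin l ⊕ Fin l)) ℝ)
    (hE : S₃ * E3 l = 0) (s : Fin l ⊕ (Fin l ⊕ Fin l)) (j : Fin l) :
    S₃ s (Sum.inr (Sum.inr j)) = S₃ s (Sum.inl j) + S₃ s (Sum.inr (Sum.inl j)) := by
  have h := congrFun (congrFun hE s) j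
  rw [Matrix.mul_apply, Matrix.zero_apply, Fintype.sum_sum_type] at h
  simp only [Fintype.sum_sum_type] at h
  simp [E3, fromRows_apply_inl, fromRows_apply_inr, Matrix.one_apply, Matrix.neg_apply,
    mul_ite, ite_mul, Finset.sum_ite_eq, Finset.sum_ite_eq'] at h
  linarith
end core3b

section core3c
open SfeasAux Matrix
variable (l : ℕ)

lemma core3 (S₃ : Matrix (Fin l ⊕ (Fin l ⊕ Fin l)) (Fin l ⊕ (Fin l ⊕ Fin l)) ℝ)
    (hS₃ : S₃.PosSemidef) (hE : S₃ * E3 l = 0) :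
    ∃ T₃ : Matrix (Fin l ⊕ (Fin l ⊕ Fin l)) (Fin l ⊕ (Fin l ⊕ Fin l)) ℝ,
      T₃.PosSemidef ∧ T₃.rank ≤ phi l ∧ T₃ * E3 l = 0 ∧
      (∀ i j, T₃ (Sum.inl i) (Sum.inl j) = S₃ (Sum.inl i) (Sum.inl j)) ∧
      (∀ i j, T₃ (Sum.inr (Sum.inl i)) (Sum.inr (Sum.inl j))
        = S₃ (Sum.inr (Sum.inl i)) (Sum.inr (Sum.inl j))) ∧
      (∀ i j, T₃ (Sum.inr (Sum.inr i)) (Sum.inr (Sum.inr j))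
        = S₃ (Sum.inr (Sum.inr i)) (Sum.inr (Sum.inr j))) := by
  classical
  have hS₃s : S₃ᵀ = S₃ := by
    rw [← S₃.conjTranspose_eq_transpose_of_trivial]; exact hS₃.1
  -- row relation by symmetry
  have hsymm : ∀ x y, S₃ x y = S₃ y x := by
    intro x y
    exact (congrFun (congrFun hS₃s y) x : S₃ᵀ y x = S₃ y x)
  have hrow : ∀ (t : Fin l ⊕ (Fin l ⊕ Fin l)) (j : Fin l),
      S₃ (Sum.inr (Sum.inr j)) t = S₃ (Sum.inl j) t + S₃ (Sum.inr (Sum.inl j)) t := by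
    intro t j
    rw [hsymm _ t, E3_col_rel l S₃ hE t j, hsymm t, hsymm t]
  -- the 2l x 2l compression
  set g : Fin l ⊕ Fin l → Fin l ⊕ (Fin l ⊕ Fin l) :=
    Sum.elim Sum.inl (Sum.inr ∘ Sum.inl) with hg
  set S₂ := S₃.submatrix g g with hS₂def
  have hS₂ : S₂.PosSemidef := hS₃.submatrix g
  obtain ⟨T, hTPSD, hTrank, hT11, hT22, hTcross⟩ := core2 l S₂ hS₂
  have hTs : Tᵀ = T := by
    rw [← T.conjTranspose_eq_transpose_of_trivial]; exact hTPSD.1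
  set T₃ := J3 l * T * (J3 l)ᵀ with hT₃
  have hT₃PSD : T₃.PosSemidef := by
    have := hTPSD.mul_mul_conjTranspose_same (J3 l)
    rwa [(J3 l).conjTranspose_eq_transpose_of_trivial] at this
  have hT₃rank : T₃.rank ≤ phi l := by
    have h1 : T₃.rank ≤ T.rank := by
      rw [hT₃, Matrix.mul_assoc]
      exact (Matrix.rank_mul_le_right _ _).trans (Matrix.rank_mul_le_left _ _)
    omega
  have hT₃E : T₃ * E3 l = 0 := by
    rw [hT₃, Matrix.mul_assoc, Matrix.mul_assoc, J3T_mul_E3, Matrix.mul_zero, Matrix.mul_zero]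
  refine ⟨T₃, hT₃PSD, hT₃rank, hT₃E, ?_, ?_, ?_⟩
  · intro i j
    rw [hT₃, Matrix.mul_assoc, J3_mul_inl, mul_J3T_inl]
    exact hT11 i j
  · intro i j
    rw [hT₃, Matrix.mul_assoc, J3_mul_inrl, mul_J3T_inrl]
    exact hT22 i j
  · intro i j
    rw [hT₃, Matrix.mul_assoc, J3_mul_inrr, mul_J3T_inrr, mul_J3T_inrr]
    have e1 := hT11 i j
    have e2 := hT22 i j
    have e3 := hTcross i j
    have hs1 : S₂ (Sum.inl i) (Sum.inl j) = S₃ (Sum.inl i) (Sum.inl j) := rfl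
    have hs2 : S₂ (Sum.inr i) (Sum.inr j)
        = S₃ (Sum.inr (Sum.inl i)) (Sum.inr (Sum.inl j)) := rfl
    have hs3 : S₂ (Sum.inl i) (Sum.inr j) = S₃ (Sum.inl i) (Sum.inr (Sum.inl j)) := rfl
    have hs4 : S₂ (Sum.inr i) (Sum.inl j) = S₃ (Sum.inr (Sum.inl i)) (Sum.inl j) := rfl
    have hrel : S₃ (Sum.inr (Sum.inr i)) (Sum.inr (Sum.inr j))
        = S₃ (Sum.inl i) (Sum.inl j) + S₃ (Sum.inl i) (Sum.inr (Sum.inl j))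
          + S₃ (Sum.inr (Sum.inl i)) (Sum.inl j)
          + S₃ (Sum.inr (Sum.inl i)) (Sum.inr (Sum.inl j)) := by
      rw [E3_col_rel l S₃ hE _ j, hrow _ i, hrow _ i]
      ring
    rw [hrel]
    linarith [e1, e2, e3, hs1, hs2, hs3, hs4]
end core3c


open SfeasAux Matrix in
/-- `𝒮` is either empty or contains an element of rank at most `p + φ(ℓ)`. -/
theorem Sfeas_exists_low_rank (p l : ℕ) (hl : 1 ≤ l)
    (V : Matrix (Fin p) (Fin l) ℝ)
    (B : Matrix (Fin p) (Fin p) ℝ) (hB : B.IsSymm)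
    (C : Matrix (Fin (3*l)) (Fin p) ℝ)
    (M1 M2 M3 : Matrix (Fin l) (Fin l) ℝ)
    (hM1 : M1.IsSymm) (hM2 : M2.IsSymm) (hM3 : M3.IsSymm)
    (h : ∃ X, Sfeas p l V B C M1 M2 M3 X) :
    ∃ X, Sfeas p l V B C M1 M2 M3 X ∧ X.rank ≤ p + phi l := by
  classical
  obtain ⟨X, hXPSD, hXB, hXC, hXM1, hXM2, hXM3, hXU⟩ := h
  set eσ : (Fin l ⊕ (Fin l ⊕ Fin l)) ≃ Fin (3*l) :=
    (Equiv.sumCongr (Equiv.refl (Fin l)) finSumFinEquiv).trans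
      (finSumFinEquiv.trans (finCongr (by ring : l + (l + l) = 3*l))) with heσ
  set eP : (Fin p ⊕ (Fin l ⊕ (Fin l ⊕ Fin l))) ≃ Fin (p + 3*l) :=
    (Equiv.sumCongr (Equiv.refl (Fin p)) eσ).trans finSumFinEquiv with heP
  have hw1 : ∀ i : Fin l, (eσ (Sum.inl i) : ℕ) = (i : ℕ) := by intro i; simp [heσ]
  have hw2 : ∀ i : Fin l, (eσ (Sum.inr (Sum.inl i)) : ℕ) = l + (i : ℕ) := by
    intro i; simp [heσ] <;> omega
  have hw3 : ∀ i : Fin l, (eσ (Sum.inr (Sum.inr i)) : ℕ) = l + (l + (i : ℕ)) := by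
    intro i; simp [heσ] <;> omega
  have hv1 : ∀ a : Fin p, (eP (Sum.inl a) : ℕ) = (a : ℕ) := by intro a; simp [heP]
  have hv2 : ∀ s, (eP (Sum.inr s) : ℕ) = p + (eσ s : ℕ) := by intro s; simp [heP]
  set Xb := X.submatrix (⇑eP) (⇑eP) with hXb
  have hXbPSD : Xb.PosSemidef := hXPSD.submatrix _
  set Ub : Matrix (Fin p ⊕ (Fin l ⊕ (Fin l ⊕ Fin l))) (Fin l) ℝ := fromRows V (E3 l) with hUb
  have hUsub : (Umat p l V).submatrix (⇑eP) id = Ub := by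
    ext x j
    rw [Matrix.submatrix_apply, id_eq]
    cases x with
    | inl a =>
      rw [hUb, fromRows_apply_inl, Umat, Matrix.of_apply,
        dif_pos (show ((eP (Sum.inl a) : ℕ)) < p from (hv1 a) ▸ a.isLt)]
      exact congrFun (congrArg V (Fin.ext (hv1 a))) j
    | inr s =>
      have hnp : ¬ ((eP (Sum.inr s) : ℕ) < p) := by rw [hv2]; omega
      rw [hUb, fromRows_apply_inr, Umat, Matrix.of_apply, dif_neg hnp]
      cases s with
      | inl i =>
        have hval : (eP (Sum.inr (Sum.inl i)) : ℕ) = p + (i : ℕ) := by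
          rw [hv2, hw1]
        rw [hval, E3, fromRows_apply_inl, Matrix.one_apply]
        have hi := i.isLt
        have hj := j.isLt
        by_cases hij : i = j
        · subst hij
          rw [if_pos (rfl : p + (i : ℕ) = p + (i : ℕ)),
            if_neg (show ¬(p + (i : ℕ) = p + l + (i : ℕ)) by omega),
            if_neg (show ¬(p + (i : ℕ) = p + 2*l + (i : ℕ)) by omega),
            if_pos (rfl : i = i)]
          norm_num
        · have hijn : (i : ℕ) ≠ (j : ℕ) := fun hc => hij (Fin.ext hc)
          rw [if_neg (show ¬(p + (i : ℕ) = p + (j : ℕ)) by omega),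
            if_neg (show ¬(p + (i : ℕ) = p + l + (j : ℕ)) by omega),
            if_neg (show ¬(p + (i : ℕ) = p + 2*l + (j : ℕ)) by omega),
            if_neg hij]
          norm_num
      | inr s =>
        cases s with
        | inl i =>
          have hval : (eP (Sum.inr (Sum.inr (Sum.inl i))) : ℕ) = p + (l + (i : ℕ)) := by
            rw [hv2, hw2]
          rw [hval, E3, fromRows_apply_inr, fromRows_apply_inl, Matrix.one_apply]
          have hi := i.isLt
          have hj := j.isLt
          by_cases hij : i = j
          · subst hij
            rw [if_neg (show ¬(p + (l + (i : ℕ)) = p + (i : ℕ)) by omega),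
              if_pos (show p + (l + (i : ℕ)) = p + l + (i : ℕ) by omega),
              if_neg (show ¬(p + (l + (i : ℕ)) = p + 2*l + (i : ℕ)) by omega),
              if_pos (rfl : i = i)]
            norm_num
          · have hijn : (i : ℕ) ≠ (j : ℕ) := fun hc => hij (Fin.ext hc)
            rw [if_neg (show ¬(p + (l + (i : ℕ)) = p + (j : ℕ)) by omega),
              if_neg (show ¬(p + (l + (i : ℕ)) = p + l + (j : ℕ)) by omega),
              if_neg (show ¬(p + (l + (i : ℕ)) = p + 2*l + (j : ℕ)) by omega),
              if_neg hij]
            norm_num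
        | inr i =>
          have hval : (eP (Sum.inr (Sum.inr (Sum.inr i))) : ℕ) = p + (l + (l + (i : ℕ))) := by
            rw [hv2, hw3]
          rw [hval, E3, fromRows_apply_inr, fromRows_apply_inr, Matrix.neg_apply,
            Matrix.one_apply]
          have hi := i.isLt
          have hj := j.isLt
          by_cases hij : i = j
          · subst hij
            rw [if_neg (show ¬(p + (l + (l + (i : ℕ))) = p + (i : ℕ)) by omega),
              if_neg (show ¬(p + (l + (l + (i : ℕ))) = p + l + (i : ℕ)) by omega),
              if_pos (show p + (l + (l + (i : ℕ))) = p + 2*l + (i : ℕ) by omega),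
              if_pos (rfl : i = i)]
            norm_num
          · have hijn : (i : ℕ) ≠ (j : ℕ) := fun hc => hij (Fin.ext hc)
            rw [if_neg (show ¬(p + (l + (l + (i : ℕ))) = p + (j : ℕ)) by omega),
              if_neg (show ¬(p + (l + (l + (i : ℕ))) = p + l + (j : ℕ)) by omega),
              if_neg (show ¬(p + (l + (l + (i : ℕ))) = p + 2*l + (j : ℕ)) by omega),
              if_neg hij]
            norm_num
  have hXUb : Ubᵀ * Xb * Ub = 0 := by
    have h1 : Ubᵀ * Xb * Ub = ((Umat p l V)ᵀ * X * (Umat p l V)).submatrix id id := by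
      rw [← hUsub, Matrix.transpose_submatrix, hXb, Matrix.submatrix_mul_equiv,
        Matrix.submatrix_mul_equiv]
    rw [h1, hXU, Matrix.submatrix_id_id]
  have hXbs : Xbᵀ = Xb := by
    rw [← Xb.conjTranspose_eq_transpose_of_trivial]; exact hXbPSD.1
  have hXbUb : Xb * Ub = 0 := by
    have h0 := mul_eq_zero_of_psd hXbPSD Ubᵀ (by rwa [Matrix.transpose_transpose])
    have h0t := congrArg Matrix.transpose h0
    rw [Matrix.transpose_mul, Matrix.transpose_transpose, hXbs, Matrix.transpose_zero] at h0t
    exact h0t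
  set Jp : Matrix (Fin p ⊕ (Fin l ⊕ (Fin l ⊕ Fin l))) (Fin p) ℝ :=
    fromRows (1 : Matrix (Fin p) (Fin p) ℝ) 0 with hJp
  obtain ⟨Xp, S, hXsplit, hXpPSD, hSPSD, hXprank, hSJ, hSs, hXpZ⟩ := schur_split Xb hXbPSD Jp
  have hXpUb : Xp * Ub = 0 := hXpZ _ inferInstance Ub hXbUb
  have hXp_eq : Xp = Xb - S := by rw [hXsplit]; abel
  have hSUb : S * Ub = 0 := by
    have : S = Xb - Xp := by rw [hXsplit]; abel
    rw [this, Matrix.sub_mul, hXbUb, hXpUb, sub_zero]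
  have hScol : ∀ x b, S x (Sum.inl b) = 0 := by
    intro x b
    have h := congrFun (congrFun hSJ x) b
    rw [Matrix.mul_apply, Matrix.zero_apply, Fintype.sum_sum_type] at h
    simp only [hJp, fromRows_apply_inl, fromRows_apply_inr, Matrix.zero_apply, mul_zero,
      Finset.sum_const_zero, add_zero, Matrix.one_apply, mul_ite, mul_one,
      Finset.sum_ite_eq', Finset.mem_univ, if_true] at h
    exact h
  have hSrow : ∀ b x, S (Sum.inl b) x = 0 := by
    intro b x
    have h : Sᵀ x (Sum.inl b) = 0 := by rw [hSs]; exact hScol x b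
    exact h
  set S₃ := S.toBlocks₂₂ with hS₃def
  have hS₃PSD : S₃.PosSemidef := hSPSD.submatrix Sum.inr
  have hS₃E : S₃ * E3 l = 0 := by
    ext s k
    have h := congrFun (congrFun hSUb (Sum.inr s)) k
    rw [Matrix.mul_apply, Matrix.zero_apply, Fintype.sum_sum_type] at h
    rw [Matrix.mul_apply, Matrix.zero_apply]
    have hz : ∑ a : Fin p, S (Sum.inr s) (Sum.inl a) * Ub (Sum.inl a) k = 0 :=
      Finset.sum_eq_zero fun a _ => by rw [hScol, zero_mul]
    rw [hz, zero_add] at h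
    calc ∑ t, S₃ s t * E3 l t k
        = ∑ t, S (Sum.inr s) (Sum.inr t) * Ub (Sum.inr t) k := by
          refine Finset.sum_congr rfl fun t _ => ?_
          rw [hUb, fromRows_apply_inr]
          rfl
      _ = 0 := h
  obtain ⟨T₃, hT₃PSD, hT₃rank, hT₃E, d1, d2, d3⟩ := core3 l S₃ hS₃PSD hS₃E
  set J2 : Matrix (Fin p ⊕ (Fin l ⊕ (Fin l ⊕ Fin l))) (Fin l ⊕ (Fin l ⊕ Fin l)) ℝ :=
    fromRows 0 1 with hJ2
  set Sb' := J2 * T₃ * J2ᵀ with hSb'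
  have hJ2mul : ∀ (M : Matrix (Fin l ⊕ (Fin l ⊕ Fin l)) (Fin p ⊕ (Fin l ⊕ (Fin l ⊕ Fin l))) ℝ),
      J2 * M = fromRows 0 M := by
    intro M
    rw [hJ2, fromRows_mul, Matrix.zero_mul, Matrix.one_mul]
  have hSb'blocks : (∀ a y, Sb' (Sum.inl a) y = 0) ∧ (∀ y a, Sb' y (Sum.inl a) = 0) ∧
      (∀ s t, Sb' (Sum.inr s) (Sum.inr t) = T₃ s t) := by
    have hJ2T : J2ᵀ = fromCols 0 1 := by
      rw [hJ2, transpose_fromRows, Matrix.transpose_zero, Matrix.transpose_one]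
    have hform : Sb' = fromBlocks 0 0 0 T₃ := by
      rw [hSb', Matrix.mul_assoc, hJ2T, mul_fromCols, Matrix.mul_zero, Matrix.mul_one,
        hJ2, fromRows_mul, Matrix.zero_mul, Matrix.one_mul,
        ← fromRows_fromCols_eq_fromBlocks, fromCols_zero]
    refine ⟨?_, ?_, ?_⟩
    · intro a y
      rw [hform]
      cases y <;>
        simp [fromBlocks_apply₁₁, fromBlocks_apply₁₂]
    · intro y a
      rw [hform]
      cases y <;>
        simp [fromBlocks_apply₁₁, fromBlocks_apply₂₁]
    · intro s t
      rw [hform, fromBlocks_apply₂₂]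
  obtain ⟨hSb'r0, hSb'c0, hSb'd⟩ := hSb'blocks
  have hSb'PSD : Sb'.PosSemidef := by
    have := hT₃PSD.mul_mul_conjTranspose_same J2
    rwa [J2.conjTranspose_eq_transpose_of_trivial] at this
  have hSb'rank : Sb'.rank ≤ phi l := by
    have h1 : Sb'.rank ≤ T₃.rank := by
      rw [hSb', Matrix.mul_assoc]
      exact (Matrix.rank_mul_le_right _ _).trans (Matrix.rank_mul_le_left _ _)
    omega
  have hJ2Ub : J2ᵀ * Ub = E3 l := by
    rw [hJ2, transpose_fromRows, Matrix.transpose_zero, Matrix.transpose_one, hUb,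
      fromCols_mul_fromRows, Matrix.zero_mul, Matrix.one_mul, zero_add]
  have hSb'Ub : Sb' * Ub = 0 := by
    rw [hSb', Matrix.mul_assoc, Matrix.mul_assoc, hJ2Ub, hT₃E, Matrix.mul_zero]
  set X'b := Xp + Sb' with hX'b
  have hX'bPSD : X'b.PosSemidef := hXpPSD.add hSb'PSD
  have hX'brank : X'b.rank ≤ p + phi l := by
    refine (matrank_add_le _ _).trans ?_
    exact add_le_add (hXprank.trans_eq (Fintype.card_fin p)) hSb'rank
  have hX'bUb : X'b * Ub = 0 := by
    rw [hX'b, Matrix.add_mul, hXpUb, hSb'Ub, add_zero]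
  have hentry : ∀ x y, X'b x y = Xb x y - S x y + Sb' x y := by
    intro x y
    rw [hX'b, hXp_eq]
    simp [Matrix.add_apply, Matrix.sub_apply]
  -- the new matrix
  refine ⟨X'b.submatrix (⇑eP.symm) (⇑eP.symm), ⟨hX'bPSD.submatrix _, ?_, ?_, ?_, ?_, ?_, ?_⟩, ?_⟩
  -- B block
  · intro i j
    have hi : (eP.symm ⟨(i : ℕ), by omega⟩ : Fin p ⊕ _) = Sum.inl i := by
      rw [Equiv.symm_apply_eq]; exact Fin.ext (hv1 i)
    have hj : (eP.symm ⟨(j : ℕ), by omega⟩ : Fin p ⊕ _) = Sum.inl j := by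
      rw [Equiv.symm_apply_eq]; exact Fin.ext (hv1 j)
    rw [Matrix.submatrix_apply, hi, hj, hentry, hSrow, hSb'r0, sub_zero, add_zero]
    rw [hXb, Matrix.submatrix_apply]
    have hii : eP (Sum.inl i) = (⟨(i : ℕ), by omega⟩ : Fin (p + 3*l)) := Fin.ext (hv1 i)
    have hjj : eP (Sum.inl j) = (⟨(j : ℕ), by omega⟩ : Fin (p + 3*l)) := Fin.ext (hv1 j)
    rw [hii, hjj]
    exact hXB i j
  -- C block
  · intro i j
    have hs : (eP.symm ⟨p + (i : ℕ), by omega⟩ : Fin p ⊕ _) = Sum.inr (eσ.symm i) := by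
      rw [Equiv.symm_apply_eq]
      refine Fin.ext ?_
      rw [hv2]
      simp
    have hj : (eP.symm ⟨(j : ℕ), by omega⟩ : Fin p ⊕ _) = Sum.inl j := by
      rw [Equiv.symm_apply_eq]; exact Fin.ext (hv1 j)
    rw [Matrix.submatrix_apply, hs, hj, hentry, hScol, hSb'c0, sub_zero, add_zero]
    rw [hXb, Matrix.submatrix_apply]
    have hii : eP (Sum.inr (eσ.symm i)) = (⟨p + (i : ℕ), by omega⟩ : Fin (p + 3*l)) := by
      refine Fin.ext ?_
      rw [hv2]
      simp
    have hjj : eP (Sum.inl j) = (⟨(j : ℕ), by omega⟩ : Fin (p + 3*l)) := Fin.ext (hv1 j)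
    rw [hii, hjj]
    exact hXC i j
  -- M1 block
  · intro i j
    have hs : ∀ k : Fin l, (eP.symm ⟨p + (k : ℕ), by omega⟩ : Fin p ⊕ _)
        = Sum.inr (Sum.inl k) := by
      intro k
      rw [Equiv.symm_apply_eq]
      exact Fin.ext (by rw [hv2, hw1])
    rw [Matrix.submatrix_apply, hs i, hs j, hentry]
    have hSd : S (Sum.inr (Sum.inl i)) (Sum.inr (Sum.inl j)) = S₃ (Sum.inl i) (Sum.inl j) := rfl
    rw [hSd, hSb'd, d1, ← hSd, sub_add_cancel]
    rw [hXb, Matrix.submatrix_apply]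
    have hii : ∀ k : Fin l, eP (Sum.inr (Sum.inl k))
        = (⟨p + (k : ℕ), by omega⟩ : Fin (p + 3*l)) := fun k => Fin.ext (by rw [hv2, hw1])
    rw [hii i, hii j]
    exact hXM1 i j
  -- M2 block
  · intro i j
    have hs : ∀ k : Fin l, (eP.symm ⟨p + l + (k : ℕ), by omega⟩ : Fin p ⊕ _)
        = Sum.inr (Sum.inr (Sum.inl k)) := by
      intro k
      rw [Equiv.symm_apply_eq]
      exact Fin.ext (show p + l + (k : ℕ) = ((eP (Sum.inr (Sum.inr (Sum.inl k)))) : ℕ) by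
        rw [hv2, hw2]; omega)
    rw [Matrix.submatrix_apply, hs i, hs j, hentry]
    have hSd : S (Sum.inr (Sum.inr (Sum.inl i))) (Sum.inr (Sum.inr (Sum.inl j)))
        = S₃ (Sum.inr (Sum.inl i)) (Sum.inr (Sum.inl j)) := rfl
    rw [hSd, hSb'd, d2, ← hSd, sub_add_cancel]
    rw [hXb, Matrix.submatrix_apply]
    have hii : ∀ k : Fin l, eP (Sum.inr (Sum.inr (Sum.inl k)))
        = (⟨p + l + (k : ℕ), by omega⟩ : Fin (p + 3*l)) :=
      fun k => Fin.ext (show ((eP (Sum.inr (Sum.inr (Sum.inl k)))) : ℕ) = p + l + (k : ℕ) by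
        rw [hv2, hw2]; omega)
    rw [hii i, hii j]
    exact hXM2 i j
  -- M3 block
  · intro i j
    have hs : ∀ k : Fin l, (eP.symm ⟨p + 2*l + (k : ℕ), by omega⟩ : Fin p ⊕ _)
        = Sum.inr (Sum.inr (Sum.inr k)) := by
      intro k
      rw [Equiv.symm_apply_eq]
      exact Fin.ext (show p + 2*l + (k : ℕ) = ((eP (Sum.inr (Sum.inr (Sum.inr k)))) : ℕ) by
        rw [hv2, hw3]; omega)
    rw [Matrix.submatrix_apply, hs i, hs j, hentry]
    have hSd : S (Sum.inr (Sum.inr (Sum.inr i))) (Sum.inr (Sum.inr (Sum.inr j)))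
        = S₃ (Sum.inr (Sum.inr i)) (Sum.inr (Sum.inr j)) := rfl
    rw [hSd, hSb'd, d3, ← hSd, sub_add_cancel]
    rw [hXb, Matrix.submatrix_apply]
    have hii : ∀ k : Fin l, eP (Sum.inr (Sum.inr (Sum.inr k)))
        = (⟨p + 2*l + (k : ℕ), by omega⟩ : Fin (p + 3*l)) :=
      fun k => Fin.ext (show ((eP (Sum.inr (Sum.inr (Sum.inr k)))) : ℕ) = p + 2*l + (k : ℕ) by
        rw [hv2, hw3]; omega)
    rw [hii i, hii j]
    exact hXM3 i j
  -- U condition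
  · have hUm : Umat p l V = Ub.submatrix (⇑eP.symm) id := by
      rw [← hUsub, Matrix.submatrix_submatrix]
      have h1 : (⇑eP ∘ ⇑eP.symm) = id := by
        funext x; simp
      have h2 : (id ∘ id : Fin l → Fin l) = id := rfl
      rw [h1, h2, Matrix.submatrix_id_id]
    rw [hUm, Matrix.transpose_submatrix, Matrix.submatrix_mul_equiv,
      Matrix.submatrix_mul_equiv, Matrix.submatrix_id_id, Matrix.mul_assoc, hX'bUb,
      Matrix.mul_zero]
  -- rank
  · rw [Matrix.rank_submatrix]
    exact hX'brank
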